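/- Let K ∈ ℤ^{n×s} be a matrix all of whose entries are finite integers, let K = Im K ⊆ ℤ_max^n, and let A ∈ ℤ_max^{n×n}, B ∈ ℤ_max^{n×p}. Then the maximal geometrically (A,B)-invariant semimodule K* contained in K is finitely generated, and, defining X₁ = K and X_{r+1} = φ(X_r), there exists k ≤ (Δ_H(K)+1)^n − Δ_H(K)^n + 1 such that K* = X_k. -/

import Mathlib

/-- The max-plus matrix–vector product over `ℤ_max = (ℤ ∪ {−∞}, max, +)`:
`(Ax)_i = max_j (A_{ij} + x_j)`. -/
def maxMulVec {m k : ℕ} (A : Matrix (Fin m) (Fin k) (WithBot ℤ))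
    (x : Fin k → WithBot ℤ) : Fin m → WithBot ℤ :=
  fun i => Finset.univ.sup fun j => A i j + x j

/-- The max-plus matrix product: `(AB)_{ij} = max_t (A_{it} + B_{tj})`. -/
def maxMatMul {m k l : ℕ} (A : Matrix (Fin m) (Fin k) (WithBot ℤ))
    (B : Matrix (Fin k) (Fin l) (WithBot ℤ)) : Matrix (Fin m) (Fin l) (WithBot ℤ) :=
  Matrix.of fun i j => Finset.univ.sup fun t => A i t + B t j

/-- `Im A`: the subsemimodule generated by the columns of `A`, i.e. the set of all
max-plus linear combinations `Ay` of the columns of `A`. -/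
def ImM {m k : ℕ} (A : Matrix (Fin m) (Fin k) (WithBot ℤ)) : Set (Fin m → WithBot ℤ) :=
  {v | ∃ y : Fin k → WithBot ℤ, v = maxMulVec A y}

/-- A subsemimodule of `ℤ_max^m`: contains `(−∞,…,−∞)`, is closed under entrywise max,
and under addition of a scalar `λ ∈ ℤ ∪ {−∞}` to all entries. -/
def IsSubsemimodule {m : ℕ} (X : Set (Fin m → WithBot ℤ)) : Prop :=
  (fun _ => ⊥) ∈ X ∧ (∀ x ∈ X, ∀ y ∈ X, x ⊔ y ∈ X) ∧
    ∀ (c : WithBot ℤ), ∀ x ∈ X, (fun i => c + x i) ∈ X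

/-- The volume of a subset of `ℤ_max^m`: the cardinality (in `ℕ ∪ {∞}`) of the set
of its elements `x` with `max_i x_i = 0`. -/
noncomputable def vol {m : ℕ} (X : Set (Fin m → WithBot ℤ)) : ℕ∞ :=
  {x ∈ X | Finset.univ.sup x = (0 : WithBot ℤ)}.encard

/-- The subsemimodule of `ℤ_max^m` generated by a set `G`: all max-plus linear
combinations of finitely many elements of `G`. -/
def maxSpan {m : ℕ} (G : Set (Fin m → WithBot ℤ)) : Set (Fin m → WithBot ℤ) :=
  {x | ∃ (k : ℕ) (u : Fin k → Fin m → WithBot ℤ) (lam : Fin k → WithBot ℤ),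
    (∀ i, u i ∈ G) ∧ x = fun j => Finset.univ.sup fun i => lam i + u i j}

/-- `Kstar A B K`: the set of initial states `x₀` for which some control sequence
`u(k)`, `k ≥ 1`, makes the trajectory `x(0) = x₀`, `x(k) = max(A x(k−1), B u(k))`
stay in `K` forever. -/
def KstarMax {n p : ℕ} (A : Matrix (Fin n) (Fin n) (WithBot ℤ))
    (B : Matrix (Fin n) (Fin p) (WithBot ℤ)) (K : Set (Fin n → WithBot ℤ)) :
    Set (Fin n → WithBot ℤ) :=
  {x₀ | ∃ (u : ℕ → Fin p → WithBot ℤ) (x : ℕ → Fin n → WithBot ℤ),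
    x 0 = x₀ ∧ (∀ k : ℕ, x (k + 1) = maxMulVec A (x k) ⊔ maxMulVec B (u (k + 1))) ∧
    ∀ k : ℕ, x k ∈ K}

/-- `φ(X) = X ∩ A⁻¹(X ⊖ Im B)`, where `A⁻¹(Y) = {u : Au ∈ Y}` and
`Z ⊖ Y = {u : ∃ y ∈ Y, max(u, y) ∈ Z}`. -/
def PhiMax {n p : ℕ} (A : Matrix (Fin n) (Fin n) (WithBot ℤ))
    (B : Matrix (Fin n) (Fin p) (WithBot ℤ)) (X : Set (Fin n → WithBot ℤ)) :
    Set (Fin n → WithBot ℤ) :=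
  X ∩ {u | maxMulVec A u ∈ {w | ∃ y ∈ ImM B, w ⊔ y ∈ X}}

/-- The sequence `X₁ = K`, `X_{r+1} = φ(X_r)`; here `XseqMax A B K r` is `X_{r+1}`,
so that `XseqMax A B K 0 = X₁ = K` and `X_k = XseqMax A B K (k−1)` for `k ≥ 1`. -/
def XseqMax {n p : ℕ} (A : Matrix (Fin n) (Fin n) (WithBot ℤ))
    (B : Matrix (Fin n) (Fin p) (WithBot ℤ)) (K : Set (Fin n → WithBot ℤ)) :
    ℕ → Set (Fin n → WithBot ℤ)
  | 0 => K
  | r + 1 => PhiMax A B (XseqMax A B K r)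

/-- The additive Hilbert seminorm of `x ∈ ℤⁿ`: `‖x‖_H = max_i x_i − min_i x_i`
(a natural number since the max dominates the min). -/
def hilbertNorm {n : ℕ} [NeZero n] (x : Fin n → ℤ) : ℕ :=
  (Finset.univ.sup' Finset.univ_nonempty x - Finset.univ.inf' Finset.univ_nonempty x).toNat

/-- `Δ_H(K)`: the maximum of the Hilbert seminorms of the columns of `K ∈ ℤ^{n×s}`. -/
def deltaH {n s : ℕ} [NeZero n] [NeZero s] (K : Matrix (Fin n) (Fin s) ℤ) : ℕ :=
  Finset.univ.sup' Finset.univ_nonempty fun j => hilbertNorm fun i => K i j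

/-- A matrix with finite integer entries, viewed as a matrix over `ℤ_max`. -/
def toZmax {n s : ℕ} (K : Matrix (Fin n) (Fin s) ℤ) : Matrix (Fin n) (Fin s) (WithBot ℤ) :=
  Matrix.of fun i j => (K i j : WithBot ℤ)

section Aux

lemma add_sup' (a b c : WithBot ℤ) : a + (b ⊔ c) = (a + b) ⊔ (a + c) := by
  rcases le_total b c with h | h
  · simp [sup_eq_right.2 h, sup_eq_right.2 (add_le_add (le_refl a) h)]
  · simp [sup_eq_left.2 h, sup_eq_left.2 (add_le_add (le_refl a) h)]

lemma add_finsup {k : ℕ} (a : WithBot ℤ) (f : Fin k → WithBot ℤ) :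
    a + Finset.univ.sup f = Finset.univ.sup fun j => a + f j :=
  Finset.comp_sup_eq_sup_comp (a + ·) (add_sup' a) (by simp)

lemma maxMulVec_bot {m k : ℕ} (A : Matrix (Fin m) (Fin k) (WithBot ℤ)) :
    maxMulVec A (fun _ => ⊥) = fun _ => ⊥ := by
  funext i; simp [maxMulVec]

lemma maxMulVec_smul {m k : ℕ} (A : Matrix (Fin m) (Fin k) (WithBot ℤ))
    (c : WithBot ℤ) (x : Fin k → WithBot ℤ) :
    maxMulVec A (fun j => c + x j) = fun i => c + maxMulVec A x i := by
  funext i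
  rw [maxMulVec, maxMulVec, add_finsup]
  congr 1; funext j; rw [add_left_comm]

lemma maxMulVec_sup {m k : ℕ} (A : Matrix (Fin m) (Fin k) (WithBot ℤ))
    (x y : Fin k → WithBot ℤ) :
    maxMulVec A (x ⊔ y) = maxMulVec A x ⊔ maxMulVec A y := by
  funext i
  rw [Pi.sup_apply, maxMulVec, maxMulVec, maxMulVec, ← Finset.sup_sup]
  congr 1; funext j; exact add_sup' _ _ _

lemma isSubsemimodule_ImM {m k : ℕ} (A : Matrix (Fin m) (Fin k) (WithBot ℤ)) :
    IsSubsemimodule (ImM A) := by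
  refine ⟨⟨fun _ => ⊥, (maxMulVec_bot A).symm⟩, ?_, ?_⟩
  · rintro x ⟨y1, rfl⟩ z ⟨y2, rfl⟩
    exact ⟨y1 ⊔ y2, (maxMulVec_sup A y1 y2).symm⟩
  · rintro c x ⟨y, rfl⟩
    exact ⟨fun j => c + y j, (maxMulVec_smul A c y).symm⟩

lemma isSubsemimodule_PhiMax {n p : ℕ} (A : Matrix (Fin n) (Fin n) (WithBot ℤ))
    (B : Matrix (Fin n) (Fin p) (WithBot ℤ)) {X : Set (Fin n → WithBot ℤ)}
    (hX : IsSubsemimodule X) : IsSubsemimodule (PhiMax A B X) := by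
  refine ⟨⟨hX.1, ?_⟩, ?_, ?_⟩
  · refine ⟨fun _ => ⊥, (isSubsemimodule_ImM B).1, ?_⟩
    have : maxMulVec A (fun _ => ⊥) ⊔ (fun _ => (⊥ : WithBot ℤ)) = fun _ => ⊥ := by
      rw [maxMulVec_bot]; funext i; simp
    rw [this]; exact hX.1
  · rintro x ⟨hx, y1, hy1, hxy1⟩ z ⟨hz, y2, hy2, hxy2⟩
    refine ⟨hX.2.1 x hx z hz, y1 ⊔ y2, (isSubsemimodule_ImM B).2.1 y1 hy1 y2 hy2, ?_⟩
    rw [maxMulVec_sup, sup_sup_sup_comm]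
    exact hX.2.1 _ hxy1 _ hxy2
  · rintro c x ⟨hx, y, hy, hxy⟩
    refine ⟨hX.2.2 c x hx, fun i => c + y i, (isSubsemimodule_ImM B).2.2 c y hy, ?_⟩
    rw [maxMulVec_smul]
    have : ((fun i => c + maxMulVec A x i) ⊔ fun i => c + y i)
        = fun i => c + (maxMulVec A x ⊔ y) i := by
      funext i; exact (add_sup' _ _ _).symm
    rw [this]
    exact hX.2.2 c _ hxy

lemma isSubsemimodule_Xseq {n s p : ℕ} (K : Matrix (Fin n) (Fin s) (WithBot ℤ))
    (A : Matrix (Fin n) (Fin n) (WithBot ℤ)) (B : Matrix (Fin n) (Fin p) (WithBot ℤ)) :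
    ∀ r, IsSubsemimodule (XseqMax A B (ImM K) r)
  | 0 => isSubsemimodule_ImM K
  | r + 1 => isSubsemimodule_PhiMax A B (isSubsemimodule_Xseq K A B r)

lemma Xseq_succ_subset {n p : ℕ} (A : Matrix (Fin n) (Fin n) (WithBot ℤ))
    (B : Matrix (Fin n) (Fin p) (WithBot ℤ)) (Kset : Set (Fin n → WithBot ℤ)) (r : ℕ) :
    XseqMax A B Kset (r + 1) ⊆ XseqMax A B Kset r :=
  Set.inter_subset_left

lemma Xseq_subset_zero {n p : ℕ} (A : Matrix (Fin n) (Fin n) (WithBot ℤ))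
    (B : Matrix (Fin n) (Fin p) (WithBot ℤ)) (Kset : Set (Fin n → WithBot ℤ)) :
    ∀ r, XseqMax A B Kset r ⊆ Kset
  | 0 => le_refl _
  | r + 1 => (Xseq_succ_subset A B Kset r).trans (Xseq_subset_zero A B Kset r)

lemma Kstar_shift {n p : ℕ} {A : Matrix (Fin n) (Fin n) (WithBot ℤ)}
    {B : Matrix (Fin n) (Fin p) (WithBot ℤ)} {Kset : Set (Fin n → WithBot ℤ)}
    {u : ℕ → Fin p → WithBot ℤ} {x : ℕ → Fin n → WithBot ℤ}
    (hrec : ∀ k : ℕ, x (k + 1) = maxMulVec A (x k) ⊔ maxMulVec B (u (k + 1)))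
    (hK : ∀ k : ℕ, x k ∈ Kset) : x 1 ∈ KstarMax A B Kset :=
  ⟨fun k => u (k + 1), fun k => x (k + 1), rfl, fun k => hrec (k + 1), fun k => hK (k + 1)⟩

lemma Kstar_subset_Xseq {n p : ℕ} (A : Matrix (Fin n) (Fin n) (WithBot ℤ))
    (B : Matrix (Fin n) (Fin p) (WithBot ℤ)) (Kset : Set (Fin n → WithBot ℤ)) :
    ∀ r, KstarMax A B Kset ⊆ XseqMax A B Kset r
  | 0 => by
    rintro x₀ ⟨u, x, h0, _, hK⟩
    exact h0 ▸ hK 0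
  | r + 1 => by
    rintro x₀ hx₀
    obtain ⟨u, x, h0, hrec, hK⟩ := hx₀
    refine ⟨Kstar_subset_Xseq A B Kset r ⟨u, x, h0, hrec, hK⟩,
      maxMulVec B (u 1), ⟨u 1, rfl⟩, ?_⟩
    have hx1 : maxMulVec A x₀ ⊔ maxMulVec B (u 1) = x 1 := by rw [hrec 0, h0]
    rw [hx1]
    exact Kstar_subset_Xseq A B Kset r (Kstar_shift hrec hK)

lemma fixed_subset_Kstar {n p : ℕ} (A : Matrix (Fin n) (Fin n) (WithBot ℤ))
    (B : Matrix (Fin n) (Fin p) (WithBot ℤ)) {Kset X : Set (Fin n → WithBot ℤ)}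
    (hfix : PhiMax A B X = X) (hXK : X ⊆ Kset) : X ⊆ KstarMax A B Kset := by
  intro a ha
  have h : ∀ v, v ∈ X → ∃ w : Fin p → WithBot ℤ,
      maxMulVec A v ⊔ maxMulVec B w ∈ X := by
    intro v hv
    have : v ∈ PhiMax A B X := by rw [hfix]; exact hv
    obtain ⟨-, y, ⟨w, rfl⟩, hxy⟩ := this
    exact ⟨w, hxy⟩
  choose! w hw using h
  let f : {v // v ∈ X} → {v // v ∈ X} :=
    fun v => ⟨maxMulVec A v.1 ⊔ maxMulVec B (w v.1), hw v.1 v.2⟩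
  let t : ℕ → {v // v ∈ X} := fun k => f^[k] ⟨a, ha⟩
  refine ⟨fun k => Nat.rec (fun _ => ⊥) (fun k _ => w (t k).1) k,
    fun k => (t k).1, rfl, ?_, fun k => hXK (t k).2⟩
  intro k
  show (t (k + 1)).1 = _
  have : t (k + 1) = f (t k) := Function.iterate_succ_apply' f k _
  rw [this]

lemma deltaH_bound {n s : ℕ} [NeZero n] [NeZero s] (K : Matrix (Fin n) (Fin s) ℤ)
    (i i0 : Fin n) (j : Fin s) : K i0 j - K i j ≤ (deltaH K : ℤ) := by
  have h1 : K i0 j ≤ Finset.univ.sup' Finset.univ_nonempty fun i' => K i' j :=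
    Finset.le_sup' (f := fun i' => K i' j) (Finset.mem_univ i0)
  have h2 : (Finset.univ.inf' Finset.univ_nonempty fun i' => K i' j) ≤ K i j :=
    Finset.inf'_le (f := fun i' => K i' j) (Finset.mem_univ i)
  have h2' : (Finset.univ.inf' Finset.univ_nonempty fun i' => K i' j) ≤ K i0 j :=
    Finset.inf'_le (f := fun i' => K i' j) (Finset.mem_univ i0)
  have h4 : ((hilbertNorm fun i' => K i' j : ℕ) : ℤ)
      = (Finset.univ.sup' Finset.univ_nonempty fun i' => K i' j)
        - Finset.univ.inf' Finset.univ_nonempty fun i' => K i' j := by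
    rw [hilbertNorm, Int.toNat_of_nonneg]; omega
  have h5 : (hilbertNorm fun i' => K i' j) ≤ deltaH K :=
    Finset.le_sup' (f := fun j' => hilbertNorm fun i' => K i' j') (Finset.mem_univ j)
  have := (Int.ofNat_le.2 h5)
  omega

lemma norm_shape {n s : ℕ} [NeZero n] [NeZero s] (K : Matrix (Fin n) (Fin s) ℤ)
    {x : Fin n → WithBot ℤ} (hx : x ∈ ImM (toZmax K))
    (h0 : Finset.univ.sup x = (0 : WithBot ℤ)) :
    ∀ i, ∃ z : ℤ, x i = (z : WithBot ℤ) ∧ -(deltaH K : ℤ) ≤ z ∧ z ≤ 0 := by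
  obtain ⟨y, rfl⟩ := hx
  obtain ⟨i0, -, hi0⟩ := Finset.exists_mem_eq_sup Finset.univ Finset.univ_nonempty
    (maxMulVec (toZmax K) y)
  have hgi0 : maxMulVec (toZmax K) y i0 = 0 := by rw [← hi0]; exact h0
  obtain ⟨j0, -, hj0⟩ := Finset.exists_mem_eq_sup Finset.univ Finset.univ_nonempty
    (fun j => toZmax K i0 j + y j)
  have hterm : toZmax K i0 j0 + y j0 = 0 := by
    rw [← hj0]; exact hgi0
  obtain ⟨c, hc⟩ : ∃ c : ℤ, y j0 = (c : WithBot ℤ) := by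
    cases hyj : y j0 with
    | bot => rw [hyj, toZmax] at hterm; simp at hterm
    | coe c => exact ⟨c, rfl⟩
  have hc' : K i0 j0 + c = 0 := by
    rw [hc] at hterm
    simp only [toZmax, Matrix.of_apply] at hterm
    exact_mod_cast hterm
  intro i
  have hub : maxMulVec (toZmax K) y i ≤ 0 := by
    rw [← h0]; exact Finset.le_sup (Finset.mem_univ i)
  have hlb : ((K i j0 + c : ℤ) : WithBot ℤ) ≤ maxMulVec (toZmax K) y i := by
    refine le_trans ?_ (Finset.le_sup (f := fun j => toZmax K i j + y j) (Finset.mem_univ j0))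
    simp only [toZmax, Matrix.of_apply, hc]
    push_cast
    exact le_refl _
  cases hxi : maxMulVec (toZmax K) y i with
  | bot => rw [hxi] at hlb; exact absurd hlb (by simp)
  | coe z =>
    refine ⟨z, rfl, ?_, ?_⟩
    · rw [hxi] at hlb
      have h6 := WithBot.coe_le_coe.1 hlb
      have h7 := deltaH_bound K i i0 j0
      omega
    · rw [hxi] at hub
      exact_mod_cast hub

lemma normSet_card {n s : ℕ} [NeZero n] [NeZero s] (K : Matrix (Fin n) (Fin s) ℤ) :
    {x : Fin n → WithBot ℤ | x ∈ ImM (toZmax K) ∧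
      Finset.univ.sup x = (0 : WithBot ℤ)}.Finite ∧
    {x : Fin n → WithBot ℤ | x ∈ ImM (toZmax K) ∧
      Finset.univ.sup x = (0 : WithBot ℤ)}.ncard ≤ (deltaH K + 1) ^ n - deltaH K ^ n := by
  set T := {x : Fin n → WithBot ℤ | x ∈ ImM (toZmax K) ∧
      Finset.univ.sup x = (0 : WithBot ℤ)} with hT
  set Δ : ℤ := (deltaH K : ℤ) with hΔ
  set e : (Fin n → WithBot ℤ) → (Fin n → ℤ) := fun x i => WithBot.unbotD 0 (x i) with he
  have hshape : ∀ x ∈ T, ∀ i, ∃ z : ℤ, x i = (z : WithBot ℤ) ∧ -Δ ≤ z ∧ z ≤ 0 :=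
    fun x hx => norm_shape K hx.1 hx.2
  have hexi : ∀ x ∈ T, e x ∈ (fun x' i => WithBot.unbotD 0 (x' i)) '' T → True := fun _ _ _ => trivial
  have hcoe : ∀ x ∈ T, ∀ i, x i = ((e x i : ℤ) : WithBot ℤ) := by
    intro x hx i
    obtain ⟨z, hz, -, -⟩ := hshape x hx i
    rw [hz, he]; simp [hz]
  have hinj : Set.InjOn e T := by
    intro x hx x' hx' hee
    funext i
    rw [hcoe x hx i, hcoe x' hx' i, hee]
  set F : Finset (Fin n → ℤ) :=
    (Fintype.piFinset fun _ => Finset.Icc (-Δ) 0) \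
      (Fintype.piFinset fun _ => Finset.Icc (-Δ) (-1)) with hF
  have him : e '' T ⊆ ↑F := by
    rintro - ⟨x, hx, rfl⟩
    rw [Finset.mem_coe, hF, Finset.mem_sdiff]
    constructor
    · rw [Fintype.mem_piFinset]
      intro i
      obtain ⟨z, hz, h1, h2⟩ := hshape x hx i
      have : e x i = z := by rw [he]; simp [hz]
      rw [this, Finset.mem_Icc]
      exact ⟨h1, h2⟩
    · intro hmem
      rw [Fintype.mem_piFinset] at hmem
      obtain ⟨i0, -, hi0⟩ := Finset.exists_mem_eq_sup Finset.univ Finset.univ_nonempty x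
      have hx0 : x i0 = ((0 : ℤ) : WithBot ℤ) := by rw [← hi0, hx.2]; rfl
      have : e x i0 = 0 := by rw [he]; simp [hx0]
      have := hmem i0
      rw [Finset.mem_Icc] at this
      omega
  have hTfin : T.Finite := Set.Finite.of_finite_image (F.finite_toSet.subset him) hinj
  refine ⟨hTfin, ?_⟩
  have h1 : T.ncard = (e '' T).ncard := (Set.ncard_image_of_injOn hinj).symm
  have h2 : (e '' T).ncard ≤ (↑F : Set (Fin n → ℤ)).ncard :=
    Set.ncard_le_ncard him F.finite_toSet
  have h3 : (↑F : Set (Fin n → ℤ)).ncard = F.card := Set.ncard_coe_finset F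
  have hsub : (Fintype.piFinset fun _ : Fin n => Finset.Icc (-Δ) (-1)) ⊆
      Fintype.piFinset fun _ => Finset.Icc (-Δ) 0 := by
    apply Fintype.piFinset_subset
    intro a
    exact Finset.Icc_subset_Icc le_rfl (by omega)
  have hcard1 : (Finset.Icc (-Δ) (0:ℤ)).card = deltaH K + 1 := by
    rw [Int.card_Icc]; omega
  have hcard2 : (Finset.Icc (-Δ) (-1:ℤ)).card = deltaH K := by
    rw [Int.card_Icc]; omega
  have h4 : F.card = (deltaH K + 1) ^ n - deltaH K ^ n := by
    rw [hF, Finset.card_sdiff_of_subset hsub, Fintype.card_piFinset, Fintype.card_piFinset]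
    simp [hcard1, hcard2]
  omega

lemma span_mem {n : ℕ} {X : Set (Fin n → WithBot ℤ)} (hX : IsSubsemimodule X)
    {k : ℕ} (u : Fin k → Fin n → WithBot ℤ) (lam : Fin k → WithBot ℤ)
    (hu : ∀ i, u i ∈ X) :
    (fun j => Finset.univ.sup fun i => lam i + u i j) ∈ X := by
  have main : ∀ t : Finset (Fin k), (fun j => t.sup fun i => lam i + u i j) ∈ X := by
    intro t
    induction t using Finset.induction_on with
    | empty => simpa using hX.1
    | @insert a t ha ih =>
      have h1 : (fun j => lam a + u a j) ∈ X := hX.2.2 _ _ (hu a)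
      have h2 := hX.2.1 _ h1 _ ih
      have heq : (fun j => (insert a t).sup fun i => lam i + u i j)
          = ((fun j => lam a + u a j) ⊔ fun j => t.sup fun i => lam i + u i j) := by
        funext j; rw [Finset.sup_insert]; rfl
      rw [heq]; exact h2
  exact main Finset.univ

lemma normalize_elt {m : ℕ} {X : Set (Fin m → WithBot ℤ)} (hX : IsSubsemimodule X)
    {x : Fin m → WithBot ℤ} (hx : x ∈ X) {i1 : Fin m} (hi : x i1 ≠ ⊥) :
    ∃ (mz : ℤ) (x' : Fin m → WithBot ℤ), x' ∈ X ∧ Finset.univ.sup x' = 0 ∧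
      x = fun i => ((mz : ℤ) : WithBot ℤ) + x' i := by
  have hmne : Finset.univ.sup x ≠ ⊥ := fun h =>
    hi (le_bot_iff.1 (h ▸ Finset.le_sup (Finset.mem_univ i1)))
  obtain ⟨mz, hmz⟩ := WithBot.ne_bot_iff_exists.1 hmne
  refine ⟨mz, fun i => ((-mz : ℤ) : WithBot ℤ) + x i, hX.2.2 _ x hx, ?_, ?_⟩
  · rw [← add_finsup, ← hmz, ← WithBot.coe_add]
    norm_num
  · funext i
    cases hxi : x i with
    | bot => simp [hxi]
    | coe a => simp only [hxi, ← WithBot.coe_add]; congr 1; ring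

end Aux
/-- Let `K ∈ ℤ^{n×s}` have all entries finite, let `𝒦 = Im K ⊆ ℤ_max^n`, and let
`A ∈ ℤ_max^{n×n}`, `B ∈ ℤ_max^{n×p}`. Then the maximal geometrically `(A,B)`-invariant
semimodule `𝒦*` contained in `𝒦` is finitely generated and, with `X₁ = 𝒦`,
`X_{r+1} = φ(X_r)`, there exists `k ≤ (Δ_H(K)+1)^n − Δ_H(K)^n + 1` with `𝒦* = X_k`. -/
theorem kstar_of_finite_matrix {n s p : ℕ} [NeZero n] [NeZero s]
    (K : Matrix (Fin n) (Fin s) ℤ)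
    (A : Matrix (Fin n) (Fin n) (WithBot ℤ)) (B : Matrix (Fin n) (Fin p) (WithBot ℤ)) :
    (∃ G : Set (Fin n → WithBot ℤ), G.Finite ∧
      KstarMax A B (ImM (toZmax K)) = maxSpan G) ∧
    ∃ k : ℕ, 1 ≤ k ∧ k ≤ (deltaH K + 1) ^ n - deltaH K ^ n + 1 ∧
      KstarMax A B (ImM (toZmax K)) = XseqMax A B (ImM (toZmax K)) (k - 1) := by
  classical
  set 𝒦 := ImM (toZmax K) with h𝒦
  set M := (deltaH K + 1) ^ n - deltaH K ^ n with hM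
  set N : ℕ → Set (Fin n → WithBot ℤ) :=
    fun r => {x | x ∈ XseqMax A B 𝒦 r ∧ Finset.univ.sup x = (0 : WithBot ℤ)} with hN
  obtain ⟨hTfin, hTcard⟩ := normSet_card K
  have hmod := isSubsemimodule_Xseq (toZmax K) A B
  have hNT : ∀ r, N r ⊆ {x : Fin n → WithBot ℤ | x ∈ ImM (toZmax K) ∧
      Finset.univ.sup x = (0 : WithBot ℤ)} :=
    fun r x hx => ⟨Xseq_subset_zero A B 𝒦 r hx.1, hx.2⟩
  have hNfin : ∀ r, (N r).Finite := fun r => hTfin.subset (hNT r)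
  have hstab : ∃ r ≤ M, XseqMax A B 𝒦 (r + 1) = XseqMax A B 𝒦 r := by
    by_contra hcon
    push_neg at hcon
    have hstrictN : ∀ r ≤ M, N (r + 1) ⊂ N r := by
      intro r hr
      have hne := hcon r hr
      have hsub := Xseq_succ_subset A B 𝒦 r
      obtain ⟨x, hxr, hxr1⟩ : ∃ x, x ∈ XseqMax A B 𝒦 r ∧ x ∉ XseqMax A B 𝒦 (r + 1) := by
        by_contra h
        push_neg at h
        exact hne (hsub.antisymm h)
      obtain ⟨i1, hi1⟩ : ∃ i, x i ≠ ⊥ := by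
        by_contra h
        push_neg at h
        exact hxr1 ((funext h : x = fun _ => ⊥) ▸ (hmod (r + 1)).1)
      obtain ⟨mz, x', hx'r, hx'sup, hxeq⟩ := normalize_elt (hmod r) hxr hi1
      have hx'notr1 : x' ∉ XseqMax A B 𝒦 (r + 1) := by
        intro hmem
        exact hxr1 (hxeq ▸ (hmod (r + 1)).2.2 _ x' hmem)
      constructor
      · exact fun z hz => ⟨hsub hz.1, hz.2⟩
      · intro hsupN
        exact hx'notr1 (hsupN ⟨hx'r, hx'sup⟩).1
    have hcard : ∀ j, j ≤ M + 1 → j + (N j).ncard ≤ (N 0).ncard := by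
      intro j
      induction j with
      | zero => simp
      | succ j ih =>
        intro hj
        have hlt : (N (j + 1)).ncard < (N j).ncard :=
          Set.ncard_lt_ncard (hstrictN j (by omega)) (hNfin j)
        have := ih (by omega)
        omega
    have hfinal := hcard (M + 1) le_rfl
    have hN0 : (N 0).ncard ≤ M := le_trans (Set.ncard_le_ncard (hNT 0) hTfin) hTcard
    omega
  obtain ⟨r, hrM, hfix⟩ := hstab
  have hfix' : PhiMax A B (XseqMax A B 𝒦 r) = XseqMax A B 𝒦 r := hfix
  have hKX : KstarMax A B 𝒦 = XseqMax A B 𝒦 r :=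
    (Kstar_subset_Xseq A B 𝒦 r).antisymm
      (fixed_subset_Kstar A B hfix' (Xseq_subset_zero A B 𝒦 r))
  refine ⟨⟨N r, hNfin r, ?_⟩, r + 1, by omega, by omega, by simpa using hKX⟩
  rw [hKX]
  apply Set.Subset.antisymm
  · intro x hx
    by_cases hbot : ∀ i, x i = ⊥
    · refine ⟨0, Fin.elim0, Fin.elim0, fun i => i.elim0, funext fun j => ?_⟩
      simp [hbot j]
    · push_neg at hbot
      obtain ⟨i1, hi1⟩ := hbot
      obtain ⟨mz, x', hx'r, hx'sup, hxeq⟩ := normalize_elt (hmod r) hx hi1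
      refine ⟨1, fun _ => x', fun _ => ((mz : ℤ) : WithBot ℤ),
        fun _ => ⟨hx'r, hx'sup⟩, ?_⟩
      rw [hxeq]
      funext j
      simp
  · rintro x ⟨k, u, lam, hu, rfl⟩
    exact span_mem (hmod r) u lam fun i => (hu i).1
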